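/- Let 0 < λ_min < λ_max < ∞, κ := λ_max/λ_min, a := (κ+1)/(κ−1), δ := (√κ − 1)/(√κ + 1), σ := 1/(λ_max − λ_min), and for m ≥ 1 let q_m(x) := 2σ Q_m(2σx − a), where Q_m is the polynomial of best uniform approximation to 1/(t+a) on [−1,1] by polynomials of degree at most m. If δᵐ (κ − 1) < 2, then q_m(x)·x > 0 for all x ∈ [λ_min, λ_max], and (max over x ∈ [λ_min,λ_max] of x·q_m(x)) / (min over x ∈ [λ_min,λ_max] of x·q_m(x)) ≤ (2 + δᵐ(κ − 1)) / (2 − δᵐ(κ − 1)). -/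

import Mathlib

open Polynomial Real

private lemma cheb_deg_le : ∀ n : ℕ, (Chebyshev.T ℝ (n : ℤ)).degree ≤ (n : ℕ)
  | 0 => by simp [Chebyshev.T_zero, degree_one_le]
  | 1 => by simp [Chebyshev.T_one, degree_X_le]
  | (n+2) => by
      have h1 := cheb_deg_le (n+1)
      have h0 := cheb_deg_le n
      have hT : Chebyshev.T ℝ ((n+2 : ℕ) : ℤ) =
          2 * X * Chebyshev.T ℝ ((n+1 : ℕ) : ℤ) - Chebyshev.T ℝ (n : ℤ) := by
        push_cast
        simpa using Chebyshev.T_add_two ℝ (n : ℤ)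
      rw [hT]
      refine le_trans (degree_sub_le _ _) (max_le ?_ ?_)
      · refine le_trans (degree_mul_le _ _) ?_
        have h2X : ((2:ℝ[X])*X).degree = 1 := by
          rw [show (2:ℝ[X]) = C 2 from (map_ofNat C 2).symm]
          exact degree_C_mul_X (by norm_num)
        rw [h2X]
        refine le_trans (add_le_add le_rfl h1) ?_
        norm_cast
        omega
      · refine le_trans h0 ?_
        norm_cast
        omega

private lemma cheb_eval_half (u : ℝ) (hu : u ≠ 0) :
    ∀ n : ℕ, (Chebyshev.T ℝ (n : ℤ)).eval ((u + u⁻¹)/2) = (u^n + (u⁻¹)^n)/2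
  | 0 => by simp [Chebyshev.T_zero]
  | 1 => by simp [Chebyshev.T_one]
  | (n+2) => by
      have h1 := cheb_eval_half u hu (n+1)
      have h0 := cheb_eval_half u hu n
      have hT : Chebyshev.T ℝ ((n+2 : ℕ) : ℤ) =
          2 * X * Chebyshev.T ℝ ((n+1 : ℕ) : ℤ) - Chebyshev.T ℝ (n : ℤ) := by
        push_cast
        simpa using Chebyshev.T_add_two ℝ (n : ℤ)
      rw [hT]
      simp only [eval_sub, eval_mul, eval_X, eval_ofNat, h1, h0]
      linear_combination ((u⁻¹)^n + u^n)/2 * (mul_inv_cancel₀ hu)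

private lemma trig_bound (d θ : ℝ) (k : ℕ) :
    |Real.cos (((k:ℝ)+2)*θ) + 2*d*Real.cos (((k:ℝ)+1)*θ) + d^2*Real.cos ((k:ℝ)*θ)| ≤
      1 + 2*d*Real.cos θ + d^2 := by
  have e1 : ((k:ℝ)+2)*θ = ((k:ℝ)+1)*θ + θ := by ring
  have e2 : (k:ℝ)*θ = ((k:ℝ)+1)*θ - θ := by ring
  rw [e1, e2, Real.cos_add, Real.cos_sub]
  set C := Real.cos (((k:ℝ)+1)*θ) with hC
  set S := Real.sin (((k:ℝ)+1)*θ) with hS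
  set c := Real.cos θ
  set s := Real.sin θ
  have h1 : S^2 + C^2 = 1 := Real.sin_sq_add_cos_sq _
  have h2 : s^2 + c^2 = 1 := Real.sin_sq_add_cos_sq _
  have hR : 0 ≤ 1 + 2*d*c + d^2 := by nlinarith [sq_nonneg (c+d)]
  have hfull : (((1+d^2)*c+2*d)*C - ((1-d^2)*s)*S)^2 + (((1+d^2)*c+2*d)*S + ((1-d^2)*s)*C)^2
      = (((1+d^2)*c+2*d)^2 + ((1-d^2)*s)^2) * (S^2+C^2) := by ring
  rw [h1, mul_one] at hfull
  have hAB : ((1+d^2)*c+2*d)^2 + ((1-d^2)*s)^2 = (1+2*d*c+d^2)^2 := by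
    linear_combination (1-d^2)^2 * h2
  rw [abs_le]
  constructor <;>
    nlinarith [sq_nonneg (((1+d^2)*c+2*d)*S + ((1-d^2)*s)*C), hfull, hAB, hR]

private lemma root_algebra (d : ℝ) (hd0 : d ≠ 0) (n : ℕ) :
    (2*(-d)^(n+2)) *
      ((((-d)^(n+2) + ((-d)⁻¹)^(n+2)))/2 + 2*d*(((-d)^(n+1) + ((-d)⁻¹)^(n+1))/2)
        + d^2*(((-d)^n + ((-d)⁻¹)^n)/2)) = (1-d^2)^2 := by
  rcases Nat.even_or_odd n with h | h
  · have hn : ((-1:ℝ))^n = 1 := h.neg_one_pow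
    simp only [inv_neg, neg_pow, inv_pow, hn, pow_succ, one_mul]
    field_simp
    ring
  · have hn : ((-1:ℝ))^n = -1 := h.neg_one_pow
    simp only [inv_neg, neg_pow, inv_pow, hn, pow_succ, one_mul]
    field_simp
    ring

set_option maxHeartbeats 2000000 in
theorem amli_best_approx_condition_bound (lmin lmax : ℝ)
    (hlmin : 0 < lmin) (hlt : lmin < lmax)
    (κ a δ σ : ℝ) (hκ : κ = lmax / lmin) (ha : a = (κ + 1) / (κ - 1))
    (hδ : δ = (Real.sqrt κ - 1) / (Real.sqrt κ + 1))
    (hσ : σ = 1 / (lmax - lmin))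
    (m : ℕ) (hm : 1 ≤ m)
    (Qm : Polynomial ℝ) (hQmdeg : Qm.degree ≤ (m : ℕ))
    (hQmbest : ∀ Q : Polynomial ℝ, Q.degree ≤ (m : ℕ) →
      sSup ((fun t : ℝ => |1 / (t + a) - Qm.eval t|) '' Set.Icc (-1 : ℝ) 1) ≤
        sSup ((fun t : ℝ => |1 / (t + a) - Q.eval t|) '' Set.Icc (-1 : ℝ) 1))
    (qm : Polynomial ℝ)
    (hqm : qm = C (2 * σ) * Qm.comp (C (2 * σ) * X - C a))
    (hsmall : δ ^ m * (κ - 1) < 2) :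
    (∀ x ∈ Set.Icc lmin lmax, 0 < qm.eval x * x) ∧
    sSup ((fun x : ℝ => x * qm.eval x) '' Set.Icc lmin lmax) /
      sInf ((fun x : ℝ => x * qm.eval x) '' Set.Icc lmin lmax) ≤
      (2 + δ ^ m * (κ - 1)) / (2 - δ ^ m * (κ - 1)) := by
  have hl0 : 0 < lmax - lmin := by linarith
  have hκ1 : 1 < κ := by rw [hκ]; exact (one_lt_div hlmin).mpr hlt
  have hκ0 : (0:ℝ) < κ := by linarith
  set s := Real.sqrt κ with hs
  have hs1 : 1 < s := by
    rw [hs, ← Real.sqrt_one]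
    exact Real.sqrt_lt_sqrt (by norm_num) hκ1
  have hsq : s^2 = κ := Real.sq_sqrt hκ0.le
  have hδ0 : 0 < δ := by rw [hδ]; exact div_pos (by linarith) (by linarith)
  have hδ1 : δ < 1 := by rw [hδ, div_lt_one (by linarith)]; linarith
  have hδs : δ * (s+1) = s - 1 := by rw [hδ]; field_simp
  have hsδ : s * (1-δ) = 1 + δ := by linear_combination -hδs
  have hκδ : κ * (1-δ)^2 = (1+δ)^2 := by
    calc κ * (1-δ)^2 = (s*(1-δ))^2 := by rw [← hsq]; ring
    _ = (1+δ)^2 := by rw [hsδ]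
  have h1δ : (0:ℝ) < 1 - δ := by linarith
  have hδ2 : (0:ℝ) < 1 - δ^2 := by nlinarith
  have hκm1 : (κ - 1) * (1-δ)^2 = 4*δ := by linear_combination hκδ
  have hκn1 : κ - 1 ≠ 0 := ne_of_gt (by linarith)
  have haδ : 2*δ*a = 1 + δ^2 := by
    rw [ha]
    field_simp
    linear_combination -hκδ
  have ha1 : 1 < a := by nlinarith [sq_nonneg (1-δ)]
  have haL : a * (lmax - lmin) = lmax + lmin := by
    rw [ha, hκ]
    have hln : lmin ≠ 0 := ne_of_gt hlmin
    field_simp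
  have hσ0 : 0 < σ := by rw [hσ]; positivity
  set c : ℝ := δ^m*(κ-1)/2 with hcdef
  have hc0 : 0 < c := by
    have := pow_pos hδ0 m
    rw [hcdef]; nlinarith
  have hc1 : c < 1 := by rw [hcdef]; linarith
  obtain ⟨n, rfl⟩ : ∃ n, m = n + 1 := ⟨m - 1, (Nat.succ_pred_eq_of_pos hm).symm⟩
  -- the candidate polynomial
  obtain ⟨ε, hεdef⟩ : ∃ ε : ℝ, ε = 2*(-δ)^(n+2)/((1-δ^2)^2) := ⟨_, rfl⟩
  obtain ⟨N, hNdef⟩ : ∃ N : ℝ[X], N = C 1 - C ε * (Chebyshev.T ℝ ((n:ℤ)+2)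
      + C (2*δ) * Chebyshev.T ℝ ((n:ℤ)+1) + C (δ^2) * Chebyshev.T ℝ (n:ℤ)) := ⟨_, rfl⟩
  have e2 : ((n:ℤ)+2) = ((n+2:ℕ):ℤ) := by push_cast; ring
  have e1 : ((n:ℤ)+1) = ((n+1:ℕ):ℤ) := by push_cast; ring
  have hu0 : (-δ) ≠ 0 := by simpa using ne_of_gt hδ0
  have huval : ((-δ) + (-δ)⁻¹)/2 = -a := by
    rw [inv_neg]
    field_simp
    linear_combination haδ
  have hNroot : N.eval (-a) = 0 := by
    rw [← huval, hNdef]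
    simp only [eval_sub, eval_mul, eval_add, eval_one, eval_C, e2, e1,
      cheb_eval_half (-δ) hu0]
    rw [sub_eq_zero, eq_comm, hεdef, div_mul_eq_mul_div,
      div_eq_one_iff_eq (by positivity : ((1-δ^2)^2 : ℝ) ≠ 0)]
    linear_combination root_algebra δ (ne_of_gt hδ0) n
  have hdvd : (X - C (-a)) ∣ N := dvd_iff_isRoot.mpr hNroot
  obtain ⟨Q, hQ⟩ := hdvd
  have hXa : (X : ℝ[X]) - C (-a) = X + C a := by rw [map_neg, sub_neg_eq_add]
  rw [hXa] at hQ
  -- degree bounds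
  have hdegN : N.degree ≤ ((n+2 : ℕ) : WithBot ℕ) := by
    have hA : (Chebyshev.T ℝ ((n:ℤ)+2)).degree ≤ ((n+2:ℕ) : WithBot ℕ) := by
      rw [e2]; exact cheb_deg_le (n+2)
    have hB : (C (2*δ) * Chebyshev.T ℝ ((n:ℤ)+1)).degree ≤ ((n+2:ℕ) : WithBot ℕ) := by
      refine le_trans (degree_mul_le _ _) ?_
      have hB1 : (Chebyshev.T ℝ ((n:ℤ)+1)).degree ≤ ((n+1:ℕ) : WithBot ℕ) := by
        rw [e1]; exact cheb_deg_le (n+1)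
      refine le_trans (add_le_add degree_C_le hB1) ?_
      rw [zero_add]
      exact_mod_cast (by omega : n+1 ≤ n+2)
    have hCc : (C (δ^2) * Chebyshev.T ℝ (n:ℤ)).degree ≤ ((n+2:ℕ) : WithBot ℕ) := by
      refine le_trans (degree_mul_le _ _) ?_
      refine le_trans (add_le_add degree_C_le (cheb_deg_le n)) ?_
      rw [zero_add]
      exact_mod_cast (by omega : n ≤ n+2)
    have hsum : (Chebyshev.T ℝ ((n:ℤ)+2) + C (2*δ) * Chebyshev.T ℝ ((n:ℤ)+1)
        + C (δ^2) * Chebyshev.T ℝ (n:ℤ)).degree ≤ ((n+2:ℕ) : WithBot ℕ) :=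
      le_trans (degree_add_le _ _) (max_le (le_trans (degree_add_le _ _) (max_le hA hB)) hCc)
    rw [hNdef]
    refine le_trans (degree_sub_le _ _) (max_le (le_trans degree_C_le ?_) ?_)
    · exact_mod_cast Nat.zero_le _
    · refine le_trans (degree_mul_le _ _) ?_
      refine le_trans (add_le_add degree_C_le hsum) ?_
      rw [zero_add]
  have hdegQ : Q.degree ≤ ((n+1 : ℕ) : WithBot ℕ) := by
    by_cases hQ0 : Q = 0
    · simp [hQ0]
    · have hXC : (X + C a : ℝ[X]) ≠ 0 := X_add_C_ne_zero a
      have h1 : N.natDegree = 1 + Q.natDegree := by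
        rw [hQ, natDegree_mul hXC hQ0, natDegree_X_add_C]
      have h2 : N.natDegree ≤ n+2 := natDegree_le_iff_degree_le.mpr hdegN
      exact natDegree_le_iff_degree_le.mp (by omega)
  -- error bound for the candidate Q
  obtain ⟨E, hEdef⟩ : ∃ E : ℝ, E = 4*δ^(n+3)/((1-δ^2)^2) := ⟨_, rfl⟩
  have hQE : ∀ t ∈ Set.Icc (-1:ℝ) 1, |1/(t+a) - Q.eval t| ≤ E := by
    intro t ht
    obtain ⟨ht1, ht2⟩ := ht
    have hta : 0 < t + a := by linarith
    set θ := Real.arccos t with hθ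
    have hcos : Real.cos θ = t := Real.cos_arccos ht1 ht2
    have hNt : N.eval t = 1 - ε * (Real.cos (((n:ℝ)+2)*θ) + 2*δ*Real.cos (((n:ℝ)+1)*θ)
        + δ^2*Real.cos ((n:ℝ)*θ)) := by
      rw [← hcos, hNdef]
      simp only [eval_sub, eval_one, eval_mul, eval_add, eval_C, Chebyshev.T_real_cos]
      push_cast
      ring
    have hQt : (t + a) * Q.eval t = N.eval t := by
      rw [hQ]; simp only [eval_mul, eval_add, eval_X, eval_C]
    rw [hNt] at hQt
    have hkey : 1/(t+a) - Q.eval t = ε * (Real.cos (((n:ℝ)+2)*θ) + 2*δ*Real.cos (((n:ℝ)+1)*θ)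
        + δ^2*Real.cos ((n:ℝ)*θ)) / (t+a) := by
      rw [div_sub' (ne_of_gt hta), div_eq_div_iff (ne_of_gt hta) (ne_of_gt hta)]
      linear_combination (-(t+a)) * hQt
    have hCS : |Real.cos (((n:ℝ)+2)*θ) + 2*δ*Real.cos (((n:ℝ)+1)*θ) + δ^2*Real.cos ((n:ℝ)*θ)|
        ≤ 2*δ*(t+a) := by
      refine le_trans (trig_bound δ θ n) ?_
      rw [hcos]
      linarith [haδ]
    have hεabs : |ε| = 2*δ^(n+2)/((1-δ^2)^2) := by
      rw [hεdef, abs_div, abs_mul, abs_pow, abs_neg, abs_of_pos hδ0,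
        abs_of_pos (by positivity : (0:ℝ) < (1-δ^2)^2)]
      norm_num
    calc |1/(t+a) - Q.eval t|
        = |ε| * |Real.cos (((n:ℝ)+2)*θ) + 2*δ*Real.cos (((n:ℝ)+1)*θ)
            + δ^2*Real.cos ((n:ℝ)*θ)| / (t+a) := by
          rw [hkey, abs_div, abs_mul, abs_of_pos hta]
      _ ≤ |ε| * (2*δ*(t+a)) / (t+a) := by
          exact (div_le_div_iff_of_pos_right hta).mpr (mul_le_mul_of_nonneg_left hCS (abs_nonneg ε))
      _ = E := by
          rw [hεabs, hEdef]
          field_simp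
          ring
  -- transfer the bound to Qm
  have himg_ne : ((fun t : ℝ => |1/(t+a) - Q.eval t|) '' Set.Icc (-1:ℝ) 1).Nonempty :=
    ⟨_, Set.mem_image_of_mem _ (by norm_num : (0:ℝ) ∈ Set.Icc (-1:ℝ) 1)⟩
  have hSupQ : sSup ((fun t : ℝ => |1/(t+a) - Q.eval t|) '' Set.Icc (-1:ℝ) 1) ≤ E := by
    refine csSup_le himg_ne ?_
    rintro y ⟨t, ht, rfl⟩
    exact hQE t ht
  have hSm : sSup ((fun t : ℝ => |1/(t+a) - Qm.eval t|) '' Set.Icc (-1:ℝ) 1) ≤ E :=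
    le_trans (hQmbest Q hdegQ) hSupQ
  have hbdd : BddAbove ((fun t : ℝ => |1/(t+a) - Qm.eval t|) '' Set.Icc (-1:ℝ) 1) := by
    apply IsCompact.bddAbove_image isCompact_Icc
    have hcont : ContinuousOn (fun t : ℝ => 1/(t+a)) (Set.Icc (-1:ℝ) 1) := by
      apply ContinuousOn.div continuousOn_const
      · exact (continuous_id.add continuous_const).continuousOn
      · intro t ht
        have h1 : -1 ≤ t := ht.1
        exact ne_of_gt (by linarith)
    exact (hcont.sub (Qm.continuous.continuousOn)).abs
  have hQmE : ∀ t ∈ Set.Icc (-1:ℝ) 1, |1/(t+a) - Qm.eval t| ≤ E := fun t ht =>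
    le_trans (le_csSup hbdd ⟨t, ht, rfl⟩) hSm
  -- pointwise bound on [lmin, lmax]
  have hap1 : a + 1 = (1+δ)^2/(2*δ) := by
    rw [eq_div_iff (by positivity)]
    linear_combination haδ
  have hk4 : κ - 1 = 4*δ/(1-δ)^2 := by
    rw [eq_div_iff (by positivity)]
    exact hκm1
  have hEc : (a+1)*E = c := by
    rw [hEdef, hcdef, hap1, hk4]
    field_simp
    ring
  have hmain : ∀ x ∈ Set.Icc lmin lmax, |x * qm.eval x - 1| ≤ c := by
    intro x hx
    obtain ⟨hx1, hx2⟩ := hx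
    obtain ⟨t, htdef⟩ : ∃ t : ℝ, t = 2*σ*x - a := ⟨_, rfl⟩
    have hta : t + a = 2*σ*x := by rw [htdef]; ring
    have hlne : lmax - lmin ≠ 0 := ne_of_gt hl0
    have hemin : 2*σ*lmin - a = -1 := by
      rw [hσ]; field_simp; linarith [haL]
    have hemax : 2*σ*lmax - a = 1 := by
      rw [hσ]; field_simp; linarith [haL]
    have hσ2 : (0:ℝ) ≤ 2*σ := by linarith
    have ht1 : -1 ≤ t := by
      rw [htdef]
      have := mul_le_mul_of_nonneg_left hx1 hσ2
      linarith [hemin]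
    have ht2 : t ≤ 1 := by
      rw [htdef]
      have := mul_le_mul_of_nonneg_left hx2 hσ2
      linarith [hemax]
    have htapos : 0 < t + a := by linarith
    have hqmx : qm.eval x = 2*σ*(Qm.eval t) := by
      rw [hqm, htdef]
      simp [eval_comp]
    have hxq : x*qm.eval x = (t+a)*Qm.eval t := by
      rw [hqmx, hta]; ring
    have herr := hQmE t ⟨ht1, ht2⟩
    have h1 : x*qm.eval x - 1 = (t+a)*(Qm.eval t - 1/(t+a)) := by
      rw [hxq, mul_sub, mul_one_div, div_self (ne_of_gt htapos)]
    have hle : t + a ≤ a + 1 := by linarith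
    calc |x*qm.eval x - 1| = (t+a) * |1/(t+a) - Qm.eval t| := by
          rw [h1, abs_mul, abs_of_pos htapos, abs_sub_comm]
      _ ≤ (a+1) * E := mul_le_mul hle herr (abs_nonneg _) (by linarith)
      _ = c := hEc
  constructor
  · intro x hx
    have h := abs_le.mp (hmain x hx)
    have := h.1
    rw [mul_comm]
    linarith
  · have himg2 : ((fun x : ℝ => x * qm.eval x) '' Set.Icc lmin lmax).Nonempty :=
      ⟨_, Set.mem_image_of_mem _ (Set.left_mem_Icc.mpr (le_of_lt hlt))⟩
    have hS : sSup ((fun x : ℝ => x * qm.eval x) '' Set.Icc lmin lmax) ≤ 1 + c := by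
      refine csSup_le himg2 ?_
      rintro y ⟨x, hx, rfl⟩
      have := (abs_le.mp (hmain x hx)).2
      simp only []
      linarith
    have hI : 1 - c ≤ sInf ((fun x : ℝ => x * qm.eval x) '' Set.Icc lmin lmax) := by
      refine le_csInf himg2 ?_
      rintro y ⟨x, hx, rfl⟩
      have := (abs_le.mp (hmain x hx)).1
      simp only []
      linarith
    have hd := div_le_div₀ (by linarith : (0:ℝ) ≤ 1+c) hS (by linarith : (0:ℝ) < 1-c) hI
    refine le_trans hd (le_of_eq ?_)
    rw [div_eq_div_iff (ne_of_gt (by linarith : (0:ℝ) < 1-c)) (ne_of_gt (by linarith : (0:ℝ) < 2 - δ^(n+1)*(κ-1)))]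
    rw [hcdef]
    ring
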